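/- Let ℓ : ℝ^d → ℝ be continuously differentiable with |ℓ(ξ)| + ‖∇ℓ(ξ)‖ ≤ C exp(a‖ξ‖) for some constants C, a > 0, let ω > 0, and let q_Λ(ξ) = Σ_{k=1}^K π_k N(ξ; μ_k, S_k^{−1}) be a Gaussian mixture density with weights π_k > 0 summing to 1 and S_k symmetric positive definite. Define f_ω(ξ; Λ) = ℓ(ξ) + ω log q_Λ(ξ) and L_ω(Λ) = ∫ q_Λ(ξ) f_ω(ξ; Λ) dξ. Fix a parameter value Λ and k ∈ {1, …, K}, and assume that differentiation under the integral sign with respect to μ_k is valid for L_ω at Λ. Then the gradient of L_ω with respect to μ_k at Λ satisfies ∇_{μ_k} L_ω(Λ) = π_k ∫ N(ξ; μ_k, S_k^{−1}) S_k(ξ − μ_k) f_ω(ξ; Λ) dξ = π_k ∫ N(ξ; μ_k, S_k^{−1}) ∇_ξ f_ω(ξ; Λ) dξ, where in both right-hand sides the integrand f_ω(·; Λ) is evaluated at the fixed current parameter value Λ. -/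

import Mathlib

open MeasureTheory Real Matrix

/-- The Gaussian density on `ℝ^d` with mean `μ` and covariance matrix `Cov`. -/
noncomputable def gaussDensity (d : ℕ) (μ : Fin d → ℝ) (Cov : Matrix (Fin d) (Fin d) ℝ)
    (ξ : Fin d → ℝ) : ℝ :=
  (2 * Real.pi) ^ (-(d : ℝ) / 2) * Cov.det ^ (-(1/2) : ℝ) *
    Real.exp (-(1/2) * ((ξ - μ) ⬝ᵥ (Cov⁻¹ *ᵥ (ξ - μ))))

noncomputable def dotCLM {d : ℕ} (c : Fin d → ℝ) : (Fin d → ℝ) →L[ℝ] ℝ :=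
  ∑ i, c i • (ContinuousLinearMap.proj i : (Fin d → ℝ) →L[ℝ] ℝ)

@[simp] lemma dotCLM_apply {d : ℕ} (c v : Fin d → ℝ) : dotCLM c v = c ⬝ᵥ v := by
  simp [dotCLM, dotProduct, ContinuousLinearMap.sum_apply]

section aux
variable {d : ℕ} {A : Matrix (Fin d) (Fin d) ℝ}

lemma sum_abs_mulVec_le (B : Matrix (Fin d) (Fin d) ℝ) (x : Fin d → ℝ) :
    ∑ i, |(B *ᵥ x) i| ≤ (∑ i, ∑ j, |B i j|) * ‖x‖ := by
  rw [Finset.sum_mul]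
  apply Finset.sum_le_sum
  intro i _
  calc |(B *ᵥ x) i| = |∑ j, B i j * x j| := by rw [Matrix.mulVec, dotProduct]
    _ ≤ ∑ j, |B i j * x j| := Finset.abs_sum_le_sum_abs _ _
    _ ≤ ∑ j, |B i j| * ‖x‖ := by
        apply Finset.sum_le_sum
        intro j _
        rw [abs_mul]
        exact mul_le_mul_of_nonneg_left
          (by rw [← Real.norm_eq_abs]; exact norm_le_pi_norm x j) (abs_nonneg _)
    _ = (∑ j, |B i j|) * ‖x‖ := by rw [Finset.sum_mul]

lemma abs_dot_le (c v : Fin d → ℝ) : |c ⬝ᵥ v| ≤ (∑ i, |c i|) * ‖v‖ := by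
  calc |c ⬝ᵥ v| = |∑ i, c i * v i| := by rw [dotProduct]
    _ ≤ ∑ i, |c i * v i| := Finset.abs_sum_le_sum_abs _ _
    _ ≤ ∑ i, |c i| * ‖v‖ := by
        apply Finset.sum_le_sum
        intro i _
        rw [abs_mul]
        exact mul_le_mul_of_nonneg_left
          (by rw [← Real.norm_eq_abs]; exact norm_le_pi_norm v i) (abs_nonneg _)
    _ = (∑ i, |c i|) * ‖v‖ := by rw [Finset.sum_mul]

lemma dot_mulVec_abs_le (B : Matrix (Fin d) (Fin d) ℝ) (x v : Fin d → ℝ) :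
    |(B *ᵥ x) ⬝ᵥ v| ≤ (∑ i, ∑ j, |B i j|) * ‖x‖ * ‖v‖ :=
  (abs_dot_le _ v).trans (mul_le_mul_of_nonneg_right (sum_abs_mulVec_le B x) (norm_nonneg v))

lemma dotCLM_opNorm_le (c : Fin d → ℝ) : ‖dotCLM c‖ ≤ ∑ i, |c i| := by
  apply ContinuousLinearMap.opNorm_le_bound _ (Finset.sum_nonneg fun i _ => abs_nonneg _)
  intro v
  rw [dotCLM_apply, Real.norm_eq_abs]
  exact abs_dot_le c v

lemma self_le_exp_self {t : ℝ} (ht : 0 ≤ t) : t ≤ Real.exp t :=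
  le_trans (by linarith) (Real.add_one_le_exp t)

lemma one_le_exp_of_nonneg {t : ℝ} (ht : 0 ≤ t) : 1 ≤ Real.exp t :=
  Real.one_le_exp ht
lemma quad_hasFDerivAt {d : ℕ} (A : Matrix (Fin d) (Fin d) ℝ) (hA : Aᵀ = A)
    (m x₀ : Fin d → ℝ) :
    HasFDerivAt (fun x : Fin d → ℝ => (x - m) ⬝ᵥ (A *ᵥ (x - m)))
      ((2:ℝ) • dotCLM (A *ᵥ (x₀ - m))) x₀ := by
  have h1 : ∀ i, HasFDerivAt (fun x : Fin d → ℝ => x i - m i)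
      (ContinuousLinearMap.proj i : (Fin d → ℝ) →L[ℝ] ℝ) x₀ := by
    intro i
    simpa using ((ContinuousLinearMap.proj i : (Fin d → ℝ) →L[ℝ] ℝ).hasFDerivAt.sub_const (m i))
  have h2 : ∀ i, HasFDerivAt (fun x : Fin d → ℝ => (A *ᵥ (x - m)) i)
      (dotCLM (A i)) x₀ := by
    intro i
    have : (fun x : Fin d → ℝ => (A *ᵥ (x - m)) i) = fun x => ∑ j, A i j * (x j - m j) := by
      funext x; simp [Matrix.mulVec, dotProduct]
    rw [this]
    have := HasFDerivAt.fun_sum (fun j (_ : j ∈ Finset.univ) => ((h1 j).const_mul (A i j)))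
    exact this.congr_fderiv rfl
  have key : HasFDerivAt (fun x : Fin d → ℝ => (x - m) ⬝ᵥ (A *ᵥ (x - m)))
      (∑ i, ((A *ᵥ (x₀ - m)) i • (ContinuousLinearMap.proj i : (Fin d → ℝ) →L[ℝ] ℝ)
            + (x₀ i - m i) • dotCLM (A i))) x₀ := by
    have : (fun x : Fin d → ℝ => (x - m) ⬝ᵥ (A *ᵥ (x - m)))
        = fun x => ∑ i, (x i - m i) * (A *ᵥ (x - m)) i := by
      funext x; simp [dotProduct, Pi.sub_apply]
    rw [this]
    exact HasFDerivAt.fun_sum fun i _ => by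
      simpa [smul_smul, add_comm] using ((h1 i).fun_mul (h2 i))
  refine key.congr_fderiv (Eq.symm ?_)
  ext v
  simp only [ContinuousLinearMap.sum_apply, ContinuousLinearMap.add_apply,
    ContinuousLinearMap.smul_apply, ContinuousLinearMap.proj_apply, dotCLM_apply,
    smul_eq_mul, ContinuousLinearMap.coe_smul', Pi.smul_apply]
  have hsym : ∀ u w : Fin d → ℝ, u ⬝ᵥ (A *ᵥ w) = (A *ᵥ u) ⬝ᵥ w := by
    intro u w
    rw [Matrix.dotProduct_mulVec, ← Matrix.vecMul_transpose, hA]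
  have : ∑ i, ((A *ᵥ (x₀ - m)) i * v i + (x₀ i - m i) * (A i ⬝ᵥ v))
      = (A *ᵥ (x₀ - m)) ⬝ᵥ v + (x₀ - m) ⬝ᵥ (A *ᵥ v) := by
    rw [Finset.sum_add_distrib]
    congr 1
  rw [this, hsym]
  ring


lemma inv_inv_of_posDef (hA : A.PosDef) : A⁻¹⁻¹ = A :=
  Matrix.nonsing_inv_nonsing_inv A (isUnit_iff_ne_zero.2 hA.det_pos.ne')

lemma transpose_eq_of_posDef (hA : A.PosDef) : Aᵀ = A := by
  have := hA.1
  simpa [Matrix.IsHermitian, Matrix.conjTranspose_eq_transpose_of_trivial] using this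

lemma gauss_expform (hA : A.PosDef) (m ξ : Fin d → ℝ) :
    gaussDensity d m A⁻¹ ξ = ((2 * Real.pi) ^ (-(d : ℝ) / 2) * (A⁻¹).det ^ (-(1/2) : ℝ)) *
      Real.exp (-(1/2) * ((ξ - m) ⬝ᵥ (A *ᵥ (ξ - m)))) := by
  rw [gaussDensity, inv_inv_of_posDef hA]

lemma gauss_const_pos (hA : A.PosDef) :
    0 < (2 * Real.pi) ^ (-(d : ℝ) / 2) * (A⁻¹).det ^ (-(1/2) : ℝ) := by
  have h1 : (0:ℝ) < 2 * Real.pi := by positivity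
  have h2 : (0:ℝ) < (A⁻¹).det := hA.inv.det_pos
  positivity

lemma gauss_pos (hA : A.PosDef) (m ξ : Fin d → ℝ) : 0 < gaussDensity d m A⁻¹ ξ := by
  rw [gauss_expform hA]
  exact mul_pos (gauss_const_pos hA) (Real.exp_pos _)

/-- derivative of the Gaussian density in the space variable -/
lemma gauss_hasFDerivAt (hA : A.PosDef) (m x₀ : Fin d → ℝ) :
    HasFDerivAt (gaussDensity d m A⁻¹)
      ((-(gaussDensity d m A⁻¹ x₀)) • dotCLM (A *ᵥ (x₀ - m))) x₀ := by
  have hfun : gaussDensity d m A⁻¹ = fun x =>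
      ((2 * Real.pi) ^ (-(d : ℝ) / 2) * (A⁻¹).det ^ (-(1/2) : ℝ)) *
      Real.exp (-(1/2) * ((x - m) ⬝ᵥ (A *ᵥ (x - m)))) := by
    funext x; exact gauss_expform hA m x
  rw [hfun]
  have h1 := ((quad_hasFDerivAt A (transpose_eq_of_posDef hA) m x₀).const_mul (-(1/2) : ℝ)).exp
  have h2 := h1.const_mul ((2 * Real.pi) ^ (-(d : ℝ) / 2) * (A⁻¹).det ^ (-(1/2) : ℝ))
  refine h2.congr_fderiv (Eq.symm ?_)
  ext v
  simp only [ContinuousLinearMap.smul_apply, dotCLM_apply, smul_eq_mul, neg_smul,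
    ContinuousLinearMap.neg_apply, ContinuousLinearMap.coe_smul', Pi.smul_apply]
  ring

/-- derivative of the Gaussian density in the mean -/
lemma gauss_hasFDerivAt_mean (hA : A.PosDef) (ξ m₀ : Fin d → ℝ) :
    HasFDerivAt (fun m => gaussDensity d m A⁻¹ ξ)
      ((gaussDensity d m₀ A⁻¹ ξ) • dotCLM (A *ᵥ (ξ - m₀))) m₀ := by
  have hfun : (fun m => gaussDensity d m A⁻¹ ξ) = fun m =>
      ((2 * Real.pi) ^ (-(d : ℝ) / 2) * (A⁻¹).det ^ (-(1/2) : ℝ)) *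
      Real.exp (-(1/2) * ((m - ξ) ⬝ᵥ (A *ᵥ (m - ξ)))) := by
    funext m
    rw [gauss_expform hA]
    congr 2
    have : ξ - m = -(m - ξ) := by abel
    rw [this, Matrix.mulVec_neg, dotProduct_neg, neg_dotProduct, neg_neg]
  rw [hfun]
  have h1 := ((quad_hasFDerivAt A (transpose_eq_of_posDef hA) ξ m₀).const_mul (-(1/2) : ℝ)).exp
  have h2 := h1.const_mul ((2 * Real.pi) ^ (-(d : ℝ) / 2) * (A⁻¹).det ^ (-(1/2) : ℝ))
  have hq : (m₀ - ξ) ⬝ᵥ A *ᵥ (m₀ - ξ) = (ξ - m₀) ⬝ᵥ A *ᵥ (ξ - m₀) := by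
    have e1 : m₀ - ξ = -(ξ - m₀) := by abel
    rw [e1, Matrix.mulVec_neg, dotProduct_neg, neg_dotProduct, neg_neg]
  refine h2.congr_fderiv (Eq.symm ?_)
  ext v
  simp only [ContinuousLinearMap.smul_apply, dotCLM_apply, smul_eq_mul, neg_smul,
    ContinuousLinearMap.neg_apply, ContinuousLinearMap.coe_smul', Pi.smul_apply]
  rw [hq, gauss_expform hA m₀ ξ]
  have e2 : (A *ᵥ (m₀ - ξ)) ⬝ᵥ v = -((A *ᵥ (ξ - m₀)) ⬝ᵥ v) := by
    have e1 : m₀ - ξ = -(ξ - m₀) := by abel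
    rw [e1, Matrix.mulVec_neg, neg_dotProduct]
  rw [e2]
  ring

/-- lower bound of a positive definite quadratic form -/
lemma posdef_quad_lower (hA : A.PosDef) :
    ∃ lam > (0:ℝ), ∀ x : Fin d → ℝ, lam * ‖x‖^2 ≤ x ⬝ᵥ (A *ᵥ x) := by
  rcases Nat.eq_zero_or_pos d with hd | hd
  · refine ⟨1, one_pos, fun x => ?_⟩
    subst hd
    have hx : x = 0 := Subsingleton.elim _ _
    have h0 : ‖x‖ = 0 := by rw [hx]; exact norm_zero
    rw [h0, hx]
    simp
  -- minimum of the quadratic form on the unit sphere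
  haveI : Nonempty (Fin d) := ⟨⟨0, hd⟩⟩
  haveI : Nontrivial (Fin d → ℝ) := Function.nontrivial
  have hsph : (Metric.sphere (0 : Fin d → ℝ) 1).Nonempty := by
    rw [NormedSpace.sphere_nonempty]
    norm_num
  have hcont : Continuous (fun x : Fin d → ℝ => x ⬝ᵥ (A *ᵥ x)) := by
    continuity
  obtain ⟨x₀, hx₀, hmin'⟩ :=
    (isCompact_sphere (0 : Fin d → ℝ) 1).exists_isMinOn hsph hcont.continuousOn
  have hmin : ∀ y ∈ Metric.sphere (0 : Fin d → ℝ) 1,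
      x₀ ⬝ᵥ (A *ᵥ x₀) ≤ y ⬝ᵥ (A *ᵥ y) := fun y hy => hmin' hy
  have hx₀norm : ‖x₀‖ = 1 := by simpa using hx₀
  have hx₀ne : x₀ ≠ 0 := by intro h; rw [h] at hx₀norm; simp at hx₀norm
  refine ⟨x₀ ⬝ᵥ (A *ᵥ x₀), hA.dotProduct_mulVec_pos hx₀ne, fun x => ?_⟩
  rcases eq_or_ne x 0 with rfl | hx
  · simp
  · have hnx : (0:ℝ) < ‖x‖ := norm_pos_iff.2 hx
    have hmem : (‖x‖⁻¹ • x) ∈ Metric.sphere (0 : Fin d → ℝ) 1 := by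
      simp [norm_smul, abs_of_pos (inv_pos.2 hnx), inv_mul_cancel₀ hnx.ne']
    have := hmin _ hmem
    have hexp : (‖x‖⁻¹ • x) ⬝ᵥ (A *ᵥ (‖x‖⁻¹ • x)) = ‖x‖⁻¹ * ‖x‖⁻¹ * (x ⬝ᵥ (A *ᵥ x)) := by
      rw [Matrix.mulVec_smul, smul_dotProduct, dotProduct_smul]
      simp [smul_eq_mul]; ring
    rw [hexp] at this
    have h2 : (x₀ ⬝ᵥ (A *ᵥ x₀)) * ‖x‖^2 ≤ (‖x‖⁻¹ * ‖x‖⁻¹ * (x ⬝ᵥ (A *ᵥ x))) * ‖x‖^2 := by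
      exact mul_le_mul_of_nonneg_right this (by positivity)
    calc (x₀ ⬝ᵥ (A *ᵥ x₀)) * ‖x‖^2 ≤ ‖x‖⁻¹ * ‖x‖⁻¹ * (x ⬝ᵥ (A *ᵥ x)) * ‖x‖^2 := h2
      _ = (‖x‖⁻¹ * ‖x‖) * (‖x‖⁻¹ * ‖x‖) * (x ⬝ᵥ (A *ᵥ x)) := by ring
      _ = x ⬝ᵥ (A *ᵥ x) := by rw [inv_mul_cancel₀ hnx.ne']; ring

/-- 1D integrability -/
lemma integrable_exp_quad_1d {c : ℝ} (hc : 0 < c) (b : ℝ) :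
    Integrable (fun x : ℝ => Real.exp (-c * x^2 + b * |x|)) := by
  have hbd : ∀ x : ℝ, ‖Real.exp (-c * x^2 + b * |x|)‖ ≤
      Real.exp (b^2/(2*c)) * Real.exp (-(c/2) * x^2) := by
    intro x
    rw [Real.norm_eq_abs, abs_of_pos (Real.exp_pos _), ← Real.exp_add]
    apply Real.exp_le_exp.2
    have h2c : (0:ℝ) < 2*c := by linarith
    rw [← mul_le_mul_iff_right₀ h2c]
    have he : 2*c*(b^2/(2*c) + -(c/2)*x^2) = b^2 - c^2*x^2 := by field_simp; ring
    rw [he]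
    nlinarith [sq_nonneg (b - c*|x|), sq_abs x]
  have hint : Integrable (fun x : ℝ => Real.exp (b^2/(2*c)) * Real.exp (-(c/2) * x^2)) :=
    (integrable_exp_neg_mul_sq (by linarith)).const_mul _
  refine hint.mono' ?_ (Filter.Eventually.of_forall hbd)
  exact (Real.continuous_exp.comp (by continuity)).aestronglyMeasurable

/-- multidimensional integrability of gaussian-type bound, sup norm -/
lemma integrable_exp_quad {c : ℝ} (hc : 0 < c) (b : ℝ) :
    Integrable (fun ξ : Fin d → ℝ => Real.exp (-c * ‖ξ‖^2 + b * ‖ξ‖)) := by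
  rcases Nat.eq_zero_or_pos d with hd | hd
  · subst hd
    have hfe : (fun ξ : Fin 0 → ℝ => Real.exp (-c * ‖ξ‖^2 + b * ‖ξ‖))
        = fun _ => Real.exp 0 := by
      funext ξ
      have hx : ξ = 0 := Subsingleton.elim _ _
      rw [hx]
      norm_num
    rw [hfe, MeasureTheory.integrable_const_iff]
    right
    constructor
    simp [MeasureTheory.volume_pi, MeasureTheory.Measure.pi_univ]
  have hprod : Integrable (fun ξ : Fin d → ℝ =>
      ∏ i, Real.exp (-(c/d) * (ξ i)^2 + |b| * |ξ i|)) := by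
    apply MeasureTheory.Integrable.fintype_prod (f := fun _ x => Real.exp (-(c/d) * x^2 + |b| * |x|))
    intro i
    exact integrable_exp_quad_1d (by positivity) _
  refine hprod.mono' ?_ (Filter.Eventually.of_forall ?_)
  · exact (Real.continuous_exp.comp (by continuity)).aestronglyMeasurable
  · intro ξ
    rw [Real.norm_eq_abs, abs_of_pos (Real.exp_pos _), ← Real.exp_sum]
    apply Real.exp_le_exp.2
    rw [Finset.sum_add_distrib]
    have h1 : -c * ‖ξ‖^2 ≤ ∑ i, -(c/d) * (ξ i)^2 := by
      have : ∀ i, (ξ i)^2 ≤ ‖ξ‖^2 := by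
        intro i
        have := norm_le_pi_norm ξ i
        have h0 : (0:ℝ) ≤ ‖ξ i‖ := norm_nonneg _
        calc (ξ i)^2 = ‖ξ i‖^2 := by rw [Real.norm_eq_abs, sq_abs]
          _ ≤ ‖ξ‖^2 := by nlinarith [norm_nonneg ξ]
      calc -c * ‖ξ‖^2 = ∑ _i : Fin d, -(c/d) * ‖ξ‖^2 := by
            rw [Finset.sum_const, Finset.card_univ, Fintype.card_fin, nsmul_eq_mul]
            field_simp
          _ ≤ ∑ i, -(c/d) * (ξ i)^2 := by
            apply Finset.sum_le_sum
            intro i _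
            have hcd : (0:ℝ) < c/d := by positivity
            nlinarith [this i]
    have h2 : b * ‖ξ‖ ≤ ∑ i, |b| * |ξ i| := by
      calc b * ‖ξ‖ ≤ |b * ‖ξ‖| := le_abs_self _
        _ = |b| * ‖ξ‖ := by rw [abs_mul, abs_of_nonneg (norm_nonneg _)]
        _ ≤ ∑ i, |b| * |ξ i| := by
            obtain ⟨i₀, hi₀⟩ : ∃ i₀ : Fin d, ‖ξ‖ = |ξ i₀| := by
              have : Nonempty (Fin d) := ⟨⟨0, hd⟩⟩
              obtain ⟨i₀, hi₀⟩ := Finite.exists_max (fun i => |ξ i|)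
              refine ⟨i₀, le_antisymm ?_ ?_⟩
              · rw [pi_norm_le_iff_of_nonneg (abs_nonneg _)]
                intro i; rw [Real.norm_eq_abs]; exact hi₀ i
              · rw [← Real.norm_eq_abs]; exact norm_le_pi_norm ξ i₀
            rw [hi₀]
            exact Finset.single_le_sum (f := fun i => |b| * |ξ i|)
              (fun i _ => by positivity) (Finset.mem_univ i₀)
    linarith

/-- Master integrability lemma: anything dominated by `exp(b‖ξ‖)` times a Gaussian factor
is integrable. -/
lemma integrable_of_gauss_bound {E : Type*} [NormedAddCommGroup E]
    (hA : A.PosDef) (m : Fin d → ℝ) {h : (Fin d → ℝ) → E}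
    (hmeas : AEStronglyMeasurable h (volume : Measure (Fin d → ℝ))) (C b : ℝ)
    (hb : ∀ ξ, ‖h ξ‖ ≤ C * Real.exp (b * ‖ξ‖) *
      Real.exp (-(1/2) * ((ξ - m) ⬝ᵥ (A *ᵥ (ξ - m))))) :
    Integrable h (volume : Measure (Fin d → ℝ)) := by
  obtain ⟨lam, hlam, hq⟩ := posdef_quad_lower hA
  have hint : Integrable (fun ξ : Fin d → ℝ =>
      |C| * Real.exp (-(lam/2) * ‖ξ‖^2 + (b + lam * ‖m‖) * ‖ξ‖)) :=
    (integrable_exp_quad (by linarith) _).const_mul _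
  refine hint.mono' hmeas (Filter.Eventually.of_forall fun ξ => ?_)
  have key : -(1/2) * ((ξ - m) ⬝ᵥ (A *ᵥ (ξ - m))) ≤ -(lam/2) * ‖ξ‖^2 + lam * ‖m‖ * ‖ξ‖ := by
    have h1 := hq (ξ - m)
    have h2 : |‖ξ‖ - ‖m‖| ≤ ‖ξ - m‖ := abs_norm_sub_norm_le ξ m
    have h3 : ‖ξ‖^2 - 2 * ‖m‖ * ‖ξ‖ ≤ ‖ξ - m‖^2 := by
      nlinarith [abs_nonneg (‖ξ‖ - ‖m‖), sq_abs (‖ξ‖ - ‖m‖), norm_nonneg (ξ - m),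
        norm_nonneg m, norm_nonneg ξ]
    nlinarith [norm_nonneg (ξ - m)]
  calc ‖h ξ‖ ≤ C * Real.exp (b * ‖ξ‖) *
        Real.exp (-(1/2) * ((ξ - m) ⬝ᵥ (A *ᵥ (ξ - m)))) := hb ξ
    _ ≤ |C| * Real.exp (b * ‖ξ‖) *
        Real.exp (-(lam/2) * ‖ξ‖^2 + lam * ‖m‖ * ‖ξ‖) := by
        apply mul_le_mul
        · exact mul_le_mul (le_abs_self C) le_rfl (Real.exp_pos _).le (abs_nonneg C)
        · exact Real.exp_le_exp.2 key
        · exact (Real.exp_pos _).le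
        · positivity
    _ = |C| * Real.exp (-(lam/2) * ‖ξ‖^2 + (b + lam * ‖m‖) * ‖ξ‖) := by
        rw [mul_assoc, ← Real.exp_add]
        congr 2
        ring

/-- The Gaussian integral of the (rescaled) centered linear factor vanishes. -/
lemma gauss_mean_zero (hA : A.PosDef) (m v : Fin d → ℝ) :
    ∫ ξ : Fin d → ℝ, gaussDensity d m A⁻¹ ξ * ((A *ᵥ (ξ - m)) ⬝ᵥ v) = 0 := by
  set c₀ : ℝ := (2 * Real.pi) ^ (-(d : ℝ) / 2) * (A⁻¹).det ^ (-(1/2) : ℝ) with hc₀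
  set h : (Fin d → ℝ) → ℝ := fun y =>
    c₀ * Real.exp (-(1/2) * (y ⬝ᵥ (A *ᵥ y))) * ((A *ᵥ y) ⬝ᵥ v) with hh
  have step1 : ∫ ξ : Fin d → ℝ, gaussDensity d m A⁻¹ ξ * ((A *ᵥ (ξ - m)) ⬝ᵥ v)
      = ∫ y : Fin d → ℝ, h y := by
    rw [← integral_add_left_eq_self
      (fun ξ : Fin d → ℝ => gaussDensity d m A⁻¹ ξ * ((A *ᵥ (ξ - m)) ⬝ᵥ v)) m]
    congr 1
    funext y
    rw [gauss_expform hA]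
    have : m + y - m = y := by abel
    rw [this]
  have step2 : ∫ y : Fin d → ℝ, h y = - ∫ y : Fin d → ℝ, h y := by
    conv_lhs => rw [← integral_neg_eq_self h volume]
    rw [← integral_neg]
    congr 1
    funext y
    have e1 : (-y) ⬝ᵥ (A *ᵥ (-y)) = y ⬝ᵥ (A *ᵥ y) := by
      rw [Matrix.mulVec_neg, dotProduct_neg, neg_dotProduct, neg_neg]
    have e2 : (A *ᵥ (-y)) ⬝ᵥ v = -((A *ᵥ y) ⬝ᵥ v) := by
      rw [Matrix.mulVec_neg, neg_dotProduct]
    simp only [hh, e1, e2]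
    ring
  rw [step1]
  linarith [step2]

end aux

lemma gauss_continuous {d : ℕ} (m : Fin d → ℝ) (Cov : Matrix (Fin d) (Fin d) ℝ) :
    Continuous (gaussDensity d m Cov) := by
  unfold gaussDensity
  continuity

lemma dotCLM_continuous {d : ℕ} : Continuous (fun c : Fin d → ℝ => dotCLM (d := d) c) := by
  unfold dotCLM
  exact continuous_finset_sum _ fun i _ => (continuous_apply i).smul continuous_const

lemma cont_dotCLM_mulVec {d : ℕ} (A : Matrix (Fin d) (Fin d) ℝ) (m : Fin d → ℝ) :
    Continuous (fun ξ : Fin d → ℝ => dotCLM (A *ᵥ (ξ - m))) := by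
  apply dotCLM_continuous.comp
  continuity

lemma cont_mulVec_dot {d : ℕ} (A : Matrix (Fin d) (Fin d) ℝ) (m v : Fin d → ℝ) :
    Continuous (fun ξ : Fin d → ℝ => (A *ᵥ (ξ - m)) ⬝ᵥ v) := by
  continuity

lemma dotCLM_apply' {d : ℕ} (c v : Fin d → ℝ) : dotCLM c v = c ⬝ᵥ v := dotCLM_apply c v

section aux2
variable {d : ℕ} {A : Matrix (Fin d) (Fin d) ℝ}

lemma quad_nonneg (hA : A.PosDef) (u : Fin d → ℝ) : 0 ≤ u ⬝ᵥ (A *ᵥ u) := by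
  obtain ⟨lam, hlam, h⟩ := posdef_quad_lower hA
  exact le_trans (by positivity) (h u)

lemma gauss_le_const (hA : A.PosDef) (m ξ : Fin d → ℝ) :
    gaussDensity d m A⁻¹ ξ ≤ (2 * Real.pi) ^ (-(d : ℝ) / 2) * (A⁻¹).det ^ (-(1/2) : ℝ) := by
  rw [gauss_expform hA]
  exact mul_le_of_le_one_right (gauss_const_pos hA).le
    (Real.exp_le_one_iff.2 (by nlinarith [quad_nonneg hA (ξ - m)]))

lemma quad_upper (u : Fin d → ℝ) :
    u ⬝ᵥ (A *ᵥ u) ≤ (∑ i, ∑ j, |A i j|) * ‖u‖ * ‖u‖ := by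
  rw [dotProduct_comm]
  exact (le_abs_self _).trans (dot_mulVec_abs_le A u u)
end aux2

set_option maxHeartbeats 2000000 in
/-- Gradient of the annealed variational objective with respect to the mean `μ_{k₀}`
of one component of a Gaussian mixture: with `q_Λ` the mixture,
`f_ω(ξ; Λ) = ℓ(ξ) + ω log q_Λ(ξ)` and `L_ω` the objective, under validity of
differentiation under the integral sign,
`∇_{μ_{k₀}} L_ω(Λ) = π_{k₀} ∫ N(ξ; μ_{k₀}, S_{k₀}⁻¹) S_{k₀}(ξ − μ_{k₀}) f_ω(ξ; Λ) dξ
                   = π_{k₀} ∫ N(ξ; μ_{k₀}, S_{k₀}⁻¹) ∇_ξ f_ω(ξ; Λ) dξ`,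
where `f_ω(·; Λ)` is evaluated at the fixed current parameter value `Λ`. -/
theorem mixture_mean_gradient
    (d K : ℕ) (hK : 1 ≤ K)
    (ℓ : (Fin d → ℝ) → ℝ) (hℓ : ContDiff ℝ 1 ℓ)
    (hgrowth : ∃ C > (0:ℝ), ∃ a > (0:ℝ), ∀ ξ,
      |ℓ ξ| + ‖fderiv ℝ ℓ ξ‖ ≤ C * Real.exp (a * ‖ξ‖))
    (ω : ℝ) (hω : 0 < ω)
    (π' : Fin K → ℝ) (hπ : ∀ k, 0 < π' k) (hsum : ∑ k, π' k = 1)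
    (μ : Fin K → Fin d → ℝ) (S : Fin K → Matrix (Fin d) (Fin d) ℝ)
    (hS : ∀ k, (S k).PosDef)
    (k₀ : Fin K) :
    let mix : (Fin d → ℝ) → (Fin d → ℝ) → ℝ := fun m ξ =>
      ∑ j, π' j * gaussDensity d (Function.update μ k₀ m j) (S j)⁻¹ ξ
    let fω : (Fin d → ℝ) → ℝ := fun ξ => ℓ ξ + ω * Real.log (mix (μ k₀) ξ)
    ∀ _hswap : HasFDerivAt
        (fun m => ∫ ξ, mix m ξ * (ℓ ξ + ω * Real.log (mix m ξ)))
        (∫ ξ, fderiv ℝ (fun m => mix m ξ * (ℓ ξ + ω * Real.log (mix m ξ))) (μ k₀))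
        (μ k₀),
      ∀ v : Fin d → ℝ,
        (∫ ξ, fderiv ℝ (fun m => mix m ξ * (ℓ ξ + ω * Real.log (mix m ξ))) (μ k₀)) v
            = π' k₀ * ∫ ξ, gaussDensity d (μ k₀) (S k₀)⁻¹ ξ *
                ((((S k₀) *ᵥ (ξ - μ k₀)) ⬝ᵥ v) * fω ξ)
          ∧ (∫ ξ, fderiv ℝ (fun m => mix m ξ * (ℓ ξ + ω * Real.log (mix m ξ))) (μ k₀)) v
            = π' k₀ * ∫ ξ, gaussDensity d (μ k₀) (S k₀)⁻¹ ξ *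
                fderiv ℝ (fun x => ℓ x + ω * Real.log (mix (μ k₀) x)) ξ v := by
  intro mix fω _hswap v
  clear _hswap
  have hA : (S k₀).PosDef := hS k₀
  set g : (Fin d → ℝ) → ℝ := gaussDensity d (μ k₀) (S k₀)⁻¹ with hg_def
  set q : (Fin d → ℝ) → ℝ := fun ξ => ∑ j, π' j * gaussDensity d (μ j) (S j)⁻¹ ξ with hq_def
  -- unfold the `let`s
  have hmix0 : ∀ ξ, mix (μ k₀) ξ = q ξ := fun ξ => by
    show (∑ j, π' j * gaussDensity d (Function.update μ k₀ (μ k₀) j) (S j)⁻¹ ξ) = _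
    rw [Function.update_eq_self]
  set fq : (Fin d → ℝ) → ℝ := fun ξ => ℓ ξ + ω * Real.log (q ξ) with hfq_def
  have hfωeq : ∀ ξ, fω ξ = fq ξ := fun ξ => by
    show ℓ ξ + ω * Real.log (mix (μ k₀) ξ) = _
    rw [hmix0]
  have hfun2 : (fun x => ℓ x + ω * Real.log (mix (μ k₀) x)) = fq :=
    funext fun x => by rw [hfq_def]; show ℓ x + ω * Real.log (mix (μ k₀) x) = _; rw [hmix0]
  simp only [hfωeq, hfun2]
  -- positivity
  have hqpos : ∀ ξ, 0 < q ξ :=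
    fun ξ => Finset.sum_pos
      (fun j _ => mul_pos (hπ j) (gauss_pos (hS j) _ _)) ⟨k₀, Finset.mem_univ k₀⟩
  have hgpos : ∀ ξ, 0 < g ξ := fun ξ => gauss_pos hA _ _
  -- derivative of the mixture in the mean of component k₀
  have hmix_fd : ∀ ξ, HasFDerivAt (fun m => mix m ξ)
      ((π' k₀ * g ξ) • dotCLM ((S k₀) *ᵥ (ξ - μ k₀))) (μ k₀) := by
    intro ξ
    have heq : (fun m => mix m ξ) = fun m => π' k₀ * gaussDensity d m (S k₀)⁻¹ ξ
        + ∑ j ∈ Finset.univ.erase k₀, π' j * gaussDensity d (μ j) (S j)⁻¹ ξ := by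
      funext m
      show (∑ j, π' j * gaussDensity d (Function.update μ k₀ m j) (S j)⁻¹ ξ) = _
      rw [← Finset.add_sum_erase _ _ (Finset.mem_univ k₀), Function.update_self]
      congr 1
      exact Finset.sum_congr rfl fun j hj => by
        rw [Function.update_of_ne (Finset.ne_of_mem_erase hj)]
    rw [heq]
    have h1 := ((gauss_hasFDerivAt_mean hA ξ (μ k₀)).const_mul (π' k₀)).add_const
      (∑ j ∈ Finset.univ.erase k₀, π' j * gaussDensity d (μ j) (S j)⁻¹ ξ)
    rw [smul_smul] at h1
    exact h1
  -- pointwise derivative of the integrand in the mean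
  have hfd : ∀ ξ, fderiv ℝ (fun m => mix m ξ * (ℓ ξ + ω * Real.log (mix m ξ))) (μ k₀)
      = ((fq ξ + ω) * (π' k₀ * g ξ)) • dotCLM ((S k₀) *ᵥ (ξ - μ k₀)) := by
    intro ξ
    have hne : mix (μ k₀) ξ ≠ 0 := by rw [hmix0]; exact (hqpos ξ).ne'
    have hlog := (hmix_fd ξ).log hne
    have hprod := (hmix_fd ξ).fun_mul ((hlog.const_mul ω).const_add (ℓ ξ))
    rw [hprod.fderiv]
    ext u
    simp only [ContinuousLinearMap.add_apply, ContinuousLinearMap.smul_apply, dotCLM_apply',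
      smul_eq_mul, ContinuousLinearMap.coe_smul', Pi.smul_apply]
    rw [hmix0, hfq_def]
    have hq0 : q ξ ≠ 0 := (hqpos ξ).ne'
    field_simp
    ring
  -- growth constants
  obtain ⟨C, hC, a, ha, hgro⟩ := hgrowth
  have hℓb : ∀ ξ, |ℓ ξ| ≤ C * Real.exp (a * ‖ξ‖) :=
    fun ξ => le_trans (le_add_of_nonneg_right (norm_nonneg _)) (hgro ξ)
  have hdℓb : ∀ ξ, ‖fderiv ℝ ℓ ξ‖ ≤ C * Real.exp (a * ‖ξ‖) :=
    fun ξ => le_trans (le_add_of_nonneg_left (abs_nonneg _)) (hgro ξ)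
  set CA : ℝ := ∑ i, ∑ j, |(S k₀) i j| with hCA_def
  have hCA0 : 0 ≤ CA := Finset.sum_nonneg fun i _ => Finset.sum_nonneg fun j _ => abs_nonneg _
  set c₀ : ℝ := (2 * Real.pi) ^ (-(d : ℝ) / 2) * ((S k₀)⁻¹).det ^ (-(1/2) : ℝ) with hc₀_def
  have hc₀ : 0 < c₀ := gauss_const_pos hA
  have hgexp : ∀ ξ, g ξ = c₀ *
      Real.exp (-(1/2) * ((ξ - μ k₀) ⬝ᵥ ((S k₀) *ᵥ (ξ - μ k₀)))) :=
    fun ξ => gauss_expform hA (μ k₀) ξ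
  -- simple exponential comparisons
  have hexp_norm : ∀ (ξ : Fin d → ℝ), ‖ξ‖ ≤ Real.exp ‖ξ‖ :=
    fun ξ => self_le_exp_self (norm_nonneg ξ)
  have hexp_mono : ∀ (b₁ b₂ : ℝ) (ξ : Fin d → ℝ), b₁ ≤ b₂ →
      Real.exp (b₁ * ‖ξ‖) ≤ Real.exp (b₂ * ‖ξ‖) :=
    fun b₁ b₂ ξ h => Real.exp_le_exp.2 (mul_le_mul_of_nonneg_right h (norm_nonneg ξ))
  have hsq_exp : ∀ (ξ : Fin d → ℝ), ‖ξ‖^2 ≤ Real.exp (2 * ‖ξ‖) := by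
    intro ξ
    have h1 := hexp_norm ξ
    calc ‖ξ‖^2 ≤ (Real.exp ‖ξ‖)^2 := by nlinarith [norm_nonneg ξ]
      _ = Real.exp (2 * ‖ξ‖) := by rw [← Real.exp_nat_mul]; norm_num
  have hone_exp : ∀ (b : ℝ) (ξ : Fin d → ℝ), 0 ≤ b → 1 ≤ Real.exp (b * ‖ξ‖) :=
    fun b ξ hb => Real.one_le_exp (by positivity)
  -- bound on |log q|
  set Mq : ℝ := ∑ j, π' j * ((2 * Real.pi) ^ (-(d : ℝ) / 2) * ((S j)⁻¹).det ^ (-(1/2) : ℝ))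
    with hMq_def
  have hq_le : ∀ ξ, q ξ ≤ Mq := by
    intro ξ
    apply Finset.sum_le_sum
    intro j _
    exact mul_le_mul_of_nonneg_left (gauss_le_const (hS j) (μ j) ξ) (hπ j).le
  have hq_ge : ∀ ξ, π' k₀ * g ξ ≤ q ξ := by
    intro ξ
    exact Finset.single_le_sum (f := fun j => π' j * gaussDensity d (μ j) (S j)⁻¹ ξ)
      (fun j _ => (mul_pos (hπ j) (gauss_pos (hS j) _ _)).le) (Finset.mem_univ k₀)
  set Cq : ℝ := |Real.log Mq| + |Real.log (π' k₀ * c₀)| + CA + CA * ‖μ k₀‖^2 with hCq_def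
  have hCq0 : 0 ≤ Cq := by positivity
  have hlogq : ∀ ξ, |Real.log (q ξ)| ≤ Cq * Real.exp (2 * ‖ξ‖) := by
    intro ξ
    set E : ℝ := Real.exp (2 * ‖ξ‖) with hE_def
    have e1 : 1 ≤ E := hone_exp 2 ξ (by norm_num)
    have e2 : ‖ξ‖^2 ≤ E := hsq_exp ξ
    have h1 : Real.log (q ξ) ≤ |Real.log Mq| :=
      le_trans (Real.log_le_log (hqpos ξ) (hq_le ξ)) (le_abs_self _)
    have h8 : ‖ξ - μ k₀‖ * ‖ξ - μ k₀‖ ≤ 2 * ‖ξ‖^2 + 2 * ‖μ k₀‖^2 := by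
      have h3 : ‖ξ - μ k₀‖ ≤ ‖ξ‖ + ‖μ k₀‖ := norm_sub_le ξ (μ k₀)
      nlinarith [norm_nonneg (ξ - μ k₀), norm_nonneg ξ, norm_nonneg (μ k₀),
        sq_nonneg (‖ξ‖ - ‖μ k₀‖)]
    have hquad : (ξ - μ k₀) ⬝ᵥ ((S k₀) *ᵥ (ξ - μ k₀)) ≤ CA * (2 * ‖ξ‖^2 + 2 * ‖μ k₀‖^2) := by
      have h2 := quad_upper (A := S k₀) (ξ - μ k₀)
      rw [← hCA_def] at h2
      calc (ξ - μ k₀) ⬝ᵥ ((S k₀) *ᵥ (ξ - μ k₀)) ≤ CA * ‖ξ - μ k₀‖ * ‖ξ - μ k₀‖ := h2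
        _ = CA * (‖ξ - μ k₀‖ * ‖ξ - μ k₀‖) := by ring
        _ ≤ CA * (2 * ‖ξ‖^2 + 2 * ‖μ k₀‖^2) := mul_le_mul_of_nonneg_left h8 hCA0
    have h4 : Real.log (π' k₀ * c₀) - (CA * ‖ξ‖^2 + CA * ‖μ k₀‖^2)
        ≤ Real.log (q ξ) := by
      have h6 : Real.log (π' k₀ * g ξ) ≤ Real.log (q ξ) :=
        Real.log_le_log (mul_pos (hπ k₀) (hgpos ξ)) (hq_ge ξ)
      have h7 : Real.log (π' k₀ * g ξ)
          = Real.log (π' k₀ * c₀) + (-(1/2) * ((ξ - μ k₀) ⬝ᵥ ((S k₀) *ᵥ (ξ - μ k₀)))) := by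
        rw [hgexp ξ, ← mul_assoc, Real.log_mul (mul_pos (hπ k₀) hc₀).ne' (Real.exp_pos _).ne',
          Real.log_exp]
      rw [h7] at h6
      have h9 : -(1/2) * (CA * (2 * ‖ξ‖^2 + 2 * ‖μ k₀‖^2))
          ≤ -(1/2) * ((ξ - μ k₀) ⬝ᵥ ((S k₀) *ᵥ (ξ - μ k₀))) := by linarith
      have h10 : -(1/2) * (CA * (2 * ‖ξ‖^2 + 2 * ‖μ k₀‖^2))
          = -(CA * ‖ξ‖^2 + CA * ‖μ k₀‖^2) := by ring
      linarith
    have p1 : CA * ‖ξ‖^2 ≤ CA * E := mul_le_mul_of_nonneg_left e2 hCA0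
    have p2 : CA * ‖μ k₀‖^2 ≤ CA * ‖μ k₀‖^2 * E :=
      le_mul_of_one_le_right (by positivity) e1
    have p3 : |Real.log (π' k₀ * c₀)| ≤ |Real.log (π' k₀ * c₀)| * E :=
      le_mul_of_one_le_right (abs_nonneg _) e1
    have p4 : |Real.log Mq| ≤ |Real.log Mq| * E :=
      le_mul_of_one_le_right (abs_nonneg _) e1
    have expand : Cq * E = |Real.log Mq| * E + |Real.log (π' k₀ * c₀)| * E
        + CA * E + CA * ‖μ k₀‖^2 * E := by rw [hCq_def]; ring
    rw [abs_le]
    constructor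
    · have := neg_abs_le (Real.log (π' k₀ * c₀))
      have hn1 : (0:ℝ) ≤ |Real.log Mq| * E := by positivity
      linarith
    · have hn2 : (0:ℝ) ≤ |Real.log (π' k₀ * c₀)| * E := by positivity
      have hn3 : (0:ℝ) ≤ CA * E := by positivity
      have hn4 : (0:ℝ) ≤ CA * ‖μ k₀‖^2 * E := by positivity
      linarith
  -- bound on |fq|
  have hfqb : ∀ ξ, |fq ξ| ≤ (C + ω * Cq) * Real.exp ((a + 2) * ‖ξ‖) := by
    intro ξ
    have h1 : |fq ξ| ≤ |ℓ ξ| + ω * |Real.log (q ξ)| := by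
      rw [hfq_def]
      calc |ℓ ξ + ω * Real.log (q ξ)| ≤ |ℓ ξ| + |ω * Real.log (q ξ)| := abs_add_le _ _
        _ = |ℓ ξ| + ω * |Real.log (q ξ)| := by rw [abs_mul, abs_of_pos hω]
    have e1 : Real.exp (a * ‖ξ‖) ≤ Real.exp ((a + 2) * ‖ξ‖) := hexp_mono _ _ ξ (by linarith)
    have e2 : Real.exp (2 * ‖ξ‖) ≤ Real.exp ((a + 2) * ‖ξ‖) := hexp_mono _ _ ξ (by linarith)
    have t1 : |ℓ ξ| ≤ C * Real.exp ((a + 2) * ‖ξ‖) :=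
      (hℓb ξ).trans (mul_le_mul_of_nonneg_left e1 hC.le)
    have t2 : ω * |Real.log (q ξ)| ≤ ω * Cq * Real.exp ((a + 2) * ‖ξ‖) := by
      calc ω * |Real.log (q ξ)| ≤ ω * (Cq * Real.exp (2 * ‖ξ‖)) :=
            mul_le_mul_of_nonneg_left (hlogq ξ) hω.le
        _ ≤ ω * (Cq * Real.exp ((a + 2) * ‖ξ‖)) :=
            mul_le_mul_of_nonneg_left (mul_le_mul_of_nonneg_left e2 hCq0) hω.le
        _ = ω * Cq * Real.exp ((a + 2) * ‖ξ‖) := by ring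
    have : (C + ω * Cq) * Real.exp ((a + 2) * ‖ξ‖)
        = C * Real.exp ((a + 2) * ‖ξ‖) + ω * Cq * Real.exp ((a + 2) * ‖ξ‖) := by ring
    linarith
  -- generic bound on the linear factor
  have hwbj : ∀ (j : Fin K) (ξ : Fin d → ℝ), |((S j) *ᵥ (ξ - μ j)) ⬝ᵥ v|
      ≤ ((∑ i, ∑ k, |(S j) i k|) * (1 + ‖μ j‖) * ‖v‖) * Real.exp ‖ξ‖ := by
    intro j ξ
    have h1 := dot_mulVec_abs_le (S j) (ξ - μ j) v
    have hC0 : (0:ℝ) ≤ ∑ i, ∑ k, |(S j) i k| :=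
      Finset.sum_nonneg fun i _ => Finset.sum_nonneg fun k _ => abs_nonneg _
    have e1 : (1:ℝ) ≤ Real.exp ‖ξ‖ := Real.one_le_exp (norm_nonneg ξ)
    have h2 : ‖ξ - μ j‖ ≤ (1 + ‖μ j‖) * Real.exp ‖ξ‖ := by
      have h3 : ‖ξ - μ j‖ ≤ ‖ξ‖ + ‖μ j‖ := norm_sub_le _ _
      have h4 : ‖ξ‖ ≤ Real.exp ‖ξ‖ := hexp_norm ξ
      have h5 : ‖μ j‖ ≤ ‖μ j‖ * Real.exp ‖ξ‖ :=
        le_mul_of_one_le_right (norm_nonneg _) e1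
      calc ‖ξ - μ j‖ ≤ ‖ξ‖ + ‖μ j‖ := h3
        _ ≤ Real.exp ‖ξ‖ + ‖μ j‖ * Real.exp ‖ξ‖ := by linarith
        _ = (1 + ‖μ j‖) * Real.exp ‖ξ‖ := by ring
    calc |((S j) *ᵥ (ξ - μ j)) ⬝ᵥ v| ≤ (∑ i, ∑ k, |(S j) i k|) * ‖ξ - μ j‖ * ‖v‖ := h1
      _ ≤ (∑ i, ∑ k, |(S j) i k|) * ((1 + ‖μ j‖) * Real.exp ‖ξ‖) * ‖v‖ := by
          apply mul_le_mul_of_nonneg_right _ (norm_nonneg v)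
          exact mul_le_mul_of_nonneg_left h2 hC0
      _ = ((∑ i, ∑ k, |(S j) i k|) * (1 + ‖μ j‖) * ‖v‖) * Real.exp ‖ξ‖ := by ring
  have hwb : ∀ ξ, |((S k₀) *ᵥ (ξ - μ k₀)) ⬝ᵥ v|
      ≤ (CA * (1 + ‖μ k₀‖) * ‖v‖) * Real.exp ‖ξ‖ := fun ξ => hwbj k₀ ξ
  -- operator norm bound for the dotCLM factor
  have hwnorm : ∀ ξ, ‖dotCLM ((S k₀) *ᵥ (ξ - μ k₀))‖ ≤ (CA * (1 + ‖μ k₀‖)) * Real.exp ‖ξ‖ := by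
    intro ξ
    have h1 := dotCLM_opNorm_le ((S k₀) *ᵥ (ξ - μ k₀))
    have h2 := sum_abs_mulVec_le (S k₀) (ξ - μ k₀)
    rw [← hCA_def] at h2
    have e1 : (1:ℝ) ≤ Real.exp ‖ξ‖ := Real.one_le_exp (norm_nonneg ξ)
    have h3 : ‖ξ - μ k₀‖ ≤ (1 + ‖μ k₀‖) * Real.exp ‖ξ‖ := by
      have h4 : ‖ξ‖ ≤ Real.exp ‖ξ‖ := hexp_norm ξ
      have h5 : ‖μ k₀‖ ≤ ‖μ k₀‖ * Real.exp ‖ξ‖ :=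
        le_mul_of_one_le_right (norm_nonneg _) e1
      calc ‖ξ - μ k₀‖ ≤ ‖ξ‖ + ‖μ k₀‖ := norm_sub_le _ _
        _ ≤ Real.exp ‖ξ‖ + ‖μ k₀‖ * Real.exp ‖ξ‖ := by linarith
        _ = (1 + ‖μ k₀‖) * Real.exp ‖ξ‖ := by ring
    calc ‖dotCLM ((S k₀) *ᵥ (ξ - μ k₀))‖ ≤ ∑ i, |((S k₀) *ᵥ (ξ - μ k₀)) i| := h1
      _ ≤ CA * ‖ξ - μ k₀‖ := h2
      _ ≤ CA * ((1 + ‖μ k₀‖) * Real.exp ‖ξ‖) := mul_le_mul_of_nonneg_left h3 hCA0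
      _ = (CA * (1 + ‖μ k₀‖)) * Real.exp ‖ξ‖ := by ring
  -- continuity facts
  have hgcont : Continuous g := gauss_continuous _ _
  have hqcont : Continuous q := by
    rw [hq_def]
    exact continuous_finset_sum _ fun j _ => continuous_const.mul (gauss_continuous _ _)
  have hfqcont : Continuous fq := by
    rw [hfq_def]
    exact hℓ.continuous.add
      (continuous_const.mul (hqcont.log fun ξ => (hqpos ξ).ne'))
  have hdotwcont : Continuous (fun ξ : Fin d → ℝ => dotCLM ((S k₀) *ᵥ (ξ - μ k₀))) :=
    cont_dotCLM_mulVec _ _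
  have hwvcont : Continuous (fun ξ : Fin d → ℝ => ((S k₀) *ᵥ (ξ - μ k₀)) ⬝ᵥ v) :=
    cont_mulVec_dot _ _ _
  -- derivative of q in the space variable
  set Dq : (Fin d → ℝ) → ((Fin d → ℝ) →L[ℝ] ℝ) := fun ξ =>
    ∑ j, π' j • ((-(gaussDensity d (μ j) (S j)⁻¹ ξ)) • dotCLM ((S j) *ᵥ (ξ - μ j)))
    with hDq_def
  have hq_fd : ∀ ξ, HasFDerivAt q (Dq ξ) ξ := by
    intro ξ
    exact HasFDerivAt.fun_sum fun j (_ : j ∈ Finset.univ) =>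
      (gauss_hasFDerivAt (hS j) (μ j) ξ).const_mul (π' j)
  have hfq_fd : ∀ ξ, HasFDerivAt fq (fderiv ℝ ℓ ξ + ω • ((q ξ)⁻¹ • Dq ξ)) ξ := by
    intro ξ
    exact (hℓ.differentiable one_ne_zero ξ).hasFDerivAt.add
      (((hq_fd ξ).log (hqpos ξ).ne').const_mul ω)
  have hfq_deriv_v : ∀ ξ, fderiv ℝ fq ξ v
      = fderiv ℝ ℓ ξ v + ω * ((q ξ)⁻¹ * (Dq ξ v)) := by
    intro ξ
    rw [(hfq_fd ξ).fderiv]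
    simp only [ContinuousLinearMap.add_apply, ContinuousLinearMap.smul_apply, smul_eq_mul]
  -- bound on Dq
  set Kv : ℝ := ∑ j, ((∑ i, ∑ k, |(S j) i k|) * (1 + ‖μ j‖) * ‖v‖) with hKv_def
  have hKvj : ∀ j : Fin K, (∑ i, ∑ k, |(S j) i k|) * (1 + ‖μ j‖) * ‖v‖ ≤ Kv := by
    intro j
    exact Finset.single_le_sum
      (f := fun j => (∑ i, ∑ k, |(S j) i k|) * (1 + ‖μ j‖) * ‖v‖)
      (fun j _ => by positivity) (Finset.mem_univ j)
  have hKv0 : 0 ≤ Kv := by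
    rw [hKv_def]
    exact Finset.sum_nonneg fun j _ => by positivity
  have hDqv_eq : ∀ ξ, Dq ξ v = ∑ j, π' j * (-(gaussDensity d (μ j) (S j)⁻¹ ξ))
      * (((S j) *ᵥ (ξ - μ j)) ⬝ᵥ v) := by
    intro ξ
    rw [hDq_def]
    simp only [ContinuousLinearMap.sum_apply, ContinuousLinearMap.smul_apply, dotCLM_apply',
      smul_eq_mul]
    exact Finset.sum_congr rfl fun j _ => by ring
  have hDqb : ∀ ξ, |Dq ξ v| ≤ (Kv * Real.exp ‖ξ‖) * q ξ := by
    intro ξ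
    rw [hDqv_eq ξ]
    calc |∑ j, π' j * (-(gaussDensity d (μ j) (S j)⁻¹ ξ)) * (((S j) *ᵥ (ξ - μ j)) ⬝ᵥ v)|
        ≤ ∑ j, |π' j * (-(gaussDensity d (μ j) (S j)⁻¹ ξ)) * (((S j) *ᵥ (ξ - μ j)) ⬝ᵥ v)| :=
          Finset.abs_sum_le_sum_abs _ _
      _ ≤ ∑ j, π' j * gaussDensity d (μ j) (S j)⁻¹ ξ * (Kv * Real.exp ‖ξ‖) := by
          apply Finset.sum_le_sum
          intro j _
          rw [abs_mul, abs_mul, abs_neg, abs_of_pos (hπ j),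
            abs_of_pos (gauss_pos (hS j) _ _)]
          apply mul_le_mul_of_nonneg_left _
            (mul_nonneg (hπ j).le (gauss_pos (hS j) _ _).le)
          calc |((S j) *ᵥ (ξ - μ j)) ⬝ᵥ v|
              ≤ ((∑ i, ∑ k, |(S j) i k|) * (1 + ‖μ j‖) * ‖v‖) * Real.exp ‖ξ‖ := hwbj j ξ
            _ ≤ Kv * Real.exp ‖ξ‖ :=
                mul_le_mul_of_nonneg_right (hKvj j) (Real.exp_pos _).le
      _ = (Kv * Real.exp ‖ξ‖) * q ξ := by
          show _ = (Kv * Real.exp ‖ξ‖) * ∑ j, π' j * gaussDensity d (μ j) (S j)⁻¹ ξ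
          rw [Finset.mul_sum]
          exact Finset.sum_congr rfl fun j _ => by ring
  -- bound on the space derivative of fq
  have hdfqb : ∀ ξ, |fderiv ℝ fq ξ v| ≤ (C * ‖v‖ + ω * Kv) * Real.exp ((a + 1) * ‖ξ‖) := by
    intro ξ
    rw [hfq_deriv_v ξ]
    have e1 : Real.exp (a * ‖ξ‖) ≤ Real.exp ((a + 1) * ‖ξ‖) := hexp_mono _ _ ξ (by linarith)
    have e2 : Real.exp (1 * ‖ξ‖) ≤ Real.exp ((a + 1) * ‖ξ‖) := hexp_mono _ _ ξ (by linarith)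
    rw [one_mul] at e2
    have t1 : |fderiv ℝ ℓ ξ v| ≤ C * ‖v‖ * Real.exp ((a + 1) * ‖ξ‖) := by
      calc |fderiv ℝ ℓ ξ v| = ‖fderiv ℝ ℓ ξ v‖ := (Real.norm_eq_abs _).symm
        _ ≤ ‖fderiv ℝ ℓ ξ‖ * ‖v‖ := ContinuousLinearMap.le_opNorm _ v
        _ ≤ (C * Real.exp (a * ‖ξ‖)) * ‖v‖ :=
            mul_le_mul_of_nonneg_right (hdℓb ξ) (norm_nonneg v)
        _ ≤ (C * Real.exp ((a + 1) * ‖ξ‖)) * ‖v‖ := by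
            apply mul_le_mul_of_nonneg_right _ (norm_nonneg v)
            exact mul_le_mul_of_nonneg_left e1 hC.le
        _ = C * ‖v‖ * Real.exp ((a + 1) * ‖ξ‖) := by ring
    have t2 : |ω * ((q ξ)⁻¹ * (Dq ξ v))| ≤ ω * Kv * Real.exp ((a + 1) * ‖ξ‖) := by
      rw [abs_mul, abs_mul, abs_of_pos hω, abs_of_pos (inv_pos.2 (hqpos ξ))]
      calc ω * ((q ξ)⁻¹ * |Dq ξ v|) ≤ ω * ((q ξ)⁻¹ * ((Kv * Real.exp ‖ξ‖) * q ξ)) := by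
            apply mul_le_mul_of_nonneg_left _ hω.le
            exact mul_le_mul_of_nonneg_left (hDqb ξ) (inv_pos.2 (hqpos ξ)).le
        _ = ω * (Kv * Real.exp ‖ξ‖) := by
            have hq0 : q ξ ≠ 0 := (hqpos ξ).ne'
            field_simp
        _ ≤ ω * (Kv * Real.exp ((a + 1) * ‖ξ‖)) := by
            apply mul_le_mul_of_nonneg_left _ hω.le
            exact mul_le_mul_of_nonneg_left e2 hKv0
        _ = ω * Kv * Real.exp ((a + 1) * ‖ξ‖) := by ring
    calc |fderiv ℝ ℓ ξ v + ω * ((q ξ)⁻¹ * (Dq ξ v))|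
        ≤ |fderiv ℝ ℓ ξ v| + |ω * ((q ξ)⁻¹ * (Dq ξ v))| := abs_add_le _ _
      _ ≤ C * ‖v‖ * Real.exp ((a + 1) * ‖ξ‖) + ω * Kv * Real.exp ((a + 1) * ‖ξ‖) := by
          linarith
      _ = (C * ‖v‖ + ω * Kv) * Real.exp ((a + 1) * ‖ξ‖) := by ring
  -- continuity of the space derivative of fq
  have hdfqcont : Continuous (fun ξ => fderiv ℝ fq ξ v) := by
    have heq : (fun ξ => fderiv ℝ fq ξ v)
        = fun ξ => fderiv ℝ ℓ ξ v + ω * ((q ξ)⁻¹ * (Dq ξ v)) := funext hfq_deriv_v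
    rw [heq]
    apply Continuous.add
    · exact (ContinuousLinearMap.apply ℝ ℝ v).continuous.comp (hℓ.continuous_fderiv one_ne_zero)
    · apply continuous_const.mul
      apply Continuous.mul (hqcont.inv₀ fun ξ => (hqpos ξ).ne')
      have heq2 : (fun ξ => Dq ξ v) = fun ξ => ∑ j, π' j * (-(gaussDensity d (μ j) (S j)⁻¹ ξ))
          * (((S j) *ᵥ (ξ - μ j)) ⬝ᵥ v) := funext hDqv_eq
      rw [heq2]
      apply continuous_finset_sum
      intro j _
      apply Continuous.mul
      · exact continuous_const.mul (gauss_continuous _ _).neg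
      · exact cont_mulVec_dot _ _ _
  -- nonnegativity of constants
  have hCw0 : 0 ≤ CA * (1 + ‖μ k₀‖) * ‖v‖ :=
    mul_nonneg (mul_nonneg hCA0 (by positivity)) (norm_nonneg v)
  have hCfq0 : 0 ≤ C + ω * Cq := by positivity
  have hCop0 : 0 ≤ CA * (1 + ‖μ k₀‖) := mul_nonneg hCA0 (by positivity)
  have hCdf0 : 0 ≤ C * ‖v‖ + ω * Kv := by positivity
  -- integrability of the various integrands
  have I1 : Integrable (fun ξ => g ξ * ((((S k₀) *ᵥ (ξ - μ k₀)) ⬝ᵥ v) * fq ξ)) := by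
    apply integrable_of_gauss_bound hA (μ k₀)
      ((hgcont.fun_mul (hwvcont.fun_mul hfqcont)).aestronglyMeasurable)
      (c₀ * ((CA * (1 + ‖μ k₀‖) * ‖v‖) * (C + ω * Cq))) (a + 3)
    intro ξ
    rw [Real.norm_eq_abs, abs_mul, abs_mul, abs_of_pos (hgpos ξ), hgexp ξ]
    have b3 : |((S k₀) *ᵥ (ξ - μ k₀)) ⬝ᵥ v| * |fq ξ|
        ≤ ((CA * (1 + ‖μ k₀‖) * ‖v‖) * (C + ω * Cq)) * Real.exp ((a + 3) * ‖ξ‖) := by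
      calc |((S k₀) *ᵥ (ξ - μ k₀)) ⬝ᵥ v| * |fq ξ|
          ≤ ((CA * (1 + ‖μ k₀‖) * ‖v‖) * Real.exp ‖ξ‖)
            * ((C + ω * Cq) * Real.exp ((a + 2) * ‖ξ‖)) :=
            mul_le_mul (hwb ξ) (hfqb ξ) (abs_nonneg _)
              (mul_nonneg hCw0 (Real.exp_pos _).le)
        _ = ((CA * (1 + ‖μ k₀‖) * ‖v‖) * (C + ω * Cq))
            * (Real.exp ‖ξ‖ * Real.exp ((a + 2) * ‖ξ‖)) := by ring
        _ = ((CA * (1 + ‖μ k₀‖) * ‖v‖) * (C + ω * Cq)) * Real.exp ((a + 3) * ‖ξ‖) := by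
            rw [← Real.exp_add]
            congr 1
            ring
    calc c₀ * Real.exp (-(1/2) * ((ξ - μ k₀) ⬝ᵥ ((S k₀) *ᵥ (ξ - μ k₀))))
          * (|((S k₀) *ᵥ (ξ - μ k₀)) ⬝ᵥ v| * |fq ξ|)
        = c₀ * (|((S k₀) *ᵥ (ξ - μ k₀)) ⬝ᵥ v| * |fq ξ|)
          * Real.exp (-(1/2) * ((ξ - μ k₀) ⬝ᵥ ((S k₀) *ᵥ (ξ - μ k₀)))) := by ring
      _ ≤ c₀ * (((CA * (1 + ‖μ k₀‖) * ‖v‖) * (C + ω * Cq)) * Real.exp ((a + 3) * ‖ξ‖))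
          * Real.exp (-(1/2) * ((ξ - μ k₀) ⬝ᵥ ((S k₀) *ᵥ (ξ - μ k₀)))) := by
          apply mul_le_mul_of_nonneg_right _ (Real.exp_pos _).le
          exact mul_le_mul_of_nonneg_left b3 hc₀.le
      _ = c₀ * ((CA * (1 + ‖μ k₀‖) * ‖v‖) * (C + ω * Cq)) * Real.exp ((a + 3) * ‖ξ‖)
          * Real.exp (-(1/2) * ((ξ - μ k₀) ⬝ᵥ ((S k₀) *ᵥ (ξ - μ k₀)))) := by ring
  have I0 : Integrable (fun ξ => g ξ * (((S k₀) *ᵥ (ξ - μ k₀)) ⬝ᵥ v)) := by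
    apply integrable_of_gauss_bound hA (μ k₀)
      ((hgcont.fun_mul hwvcont).aestronglyMeasurable)
      (c₀ * (CA * (1 + ‖μ k₀‖) * ‖v‖)) 1
    intro ξ
    rw [Real.norm_eq_abs, abs_mul, abs_of_pos (hgpos ξ), hgexp ξ]
    have b1 := hwb ξ
    calc c₀ * Real.exp (-(1/2) * ((ξ - μ k₀) ⬝ᵥ ((S k₀) *ᵥ (ξ - μ k₀))))
          * |((S k₀) *ᵥ (ξ - μ k₀)) ⬝ᵥ v|
        = c₀ * |((S k₀) *ᵥ (ξ - μ k₀)) ⬝ᵥ v|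
          * Real.exp (-(1/2) * ((ξ - μ k₀) ⬝ᵥ ((S k₀) *ᵥ (ξ - μ k₀)))) := by ring
      _ ≤ c₀ * ((CA * (1 + ‖μ k₀‖) * ‖v‖) * Real.exp ‖ξ‖)
          * Real.exp (-(1/2) * ((ξ - μ k₀) ⬝ᵥ ((S k₀) *ᵥ (ξ - μ k₀)))) := by
          apply mul_le_mul_of_nonneg_right _ (Real.exp_pos _).le
          exact mul_le_mul_of_nonneg_left b1 hc₀.le
      _ = c₀ * (CA * (1 + ‖μ k₀‖) * ‖v‖) * Real.exp (1 * ‖ξ‖)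
          * Real.exp (-(1/2) * ((ξ - μ k₀) ⬝ᵥ ((S k₀) *ᵥ (ξ - μ k₀)))) := by
          rw [one_mul]
          ring
  have I2 : Integrable (fun ξ => g ξ * fq ξ) := by
    apply integrable_of_gauss_bound hA (μ k₀)
      ((hgcont.fun_mul hfqcont).aestronglyMeasurable) (c₀ * (C + ω * Cq)) (a + 2)
    intro ξ
    rw [Real.norm_eq_abs, abs_mul, abs_of_pos (hgpos ξ), hgexp ξ]
    calc c₀ * Real.exp (-(1/2) * ((ξ - μ k₀) ⬝ᵥ ((S k₀) *ᵥ (ξ - μ k₀)))) * |fq ξ|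
        = c₀ * |fq ξ|
          * Real.exp (-(1/2) * ((ξ - μ k₀) ⬝ᵥ ((S k₀) *ᵥ (ξ - μ k₀)))) := by ring
      _ ≤ c₀ * ((C + ω * Cq) * Real.exp ((a + 2) * ‖ξ‖))
          * Real.exp (-(1/2) * ((ξ - μ k₀) ⬝ᵥ ((S k₀) *ᵥ (ξ - μ k₀)))) := by
          apply mul_le_mul_of_nonneg_right _ (Real.exp_pos _).le
          exact mul_le_mul_of_nonneg_left (hfqb ξ) hc₀.le
      _ = c₀ * (C + ω * Cq) * Real.exp ((a + 2) * ‖ξ‖)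
          * Real.exp (-(1/2) * ((ξ - μ k₀) ⬝ᵥ ((S k₀) *ᵥ (ξ - μ k₀)))) := by ring
  have I3 : Integrable (fun ξ => g ξ * fderiv ℝ fq ξ v) := by
    apply integrable_of_gauss_bound hA (μ k₀)
      ((hgcont.fun_mul hdfqcont).aestronglyMeasurable) (c₀ * (C * ‖v‖ + ω * Kv)) (a + 1)
    intro ξ
    rw [Real.norm_eq_abs, abs_mul, abs_of_pos (hgpos ξ), hgexp ξ]
    calc c₀ * Real.exp (-(1/2) * ((ξ - μ k₀) ⬝ᵥ ((S k₀) *ᵥ (ξ - μ k₀))))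
          * |fderiv ℝ fq ξ v|
        = c₀ * |fderiv ℝ fq ξ v|
          * Real.exp (-(1/2) * ((ξ - μ k₀) ⬝ᵥ ((S k₀) *ᵥ (ξ - μ k₀)))) := by ring
      _ ≤ c₀ * ((C * ‖v‖ + ω * Kv) * Real.exp ((a + 1) * ‖ξ‖))
          * Real.exp (-(1/2) * ((ξ - μ k₀) ⬝ᵥ ((S k₀) *ᵥ (ξ - μ k₀)))) := by
          apply mul_le_mul_of_nonneg_right _ (Real.exp_pos _).le
          exact mul_le_mul_of_nonneg_left (hdfqb ξ) hc₀.le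
      _ = c₀ * (C * ‖v‖ + ω * Kv) * Real.exp ((a + 1) * ‖ξ‖)
          * Real.exp (-(1/2) * ((ξ - μ k₀) ⬝ᵥ ((S k₀) *ᵥ (ξ - μ k₀)))) := by ring
  have hgderiv : ∀ ξ, fderiv ℝ g ξ v = -(g ξ * (((S k₀) *ᵥ (ξ - μ k₀)) ⬝ᵥ v)) := by
    intro ξ
    rw [(gauss_hasFDerivAt hA (μ k₀) ξ).fderiv]
    simp only [ContinuousLinearMap.smul_apply, dotCLM_apply', smul_eq_mul]
    ring
  have hI4eq : (fun ξ => fderiv ℝ g ξ v * fq ξ)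
      = fun ξ => -(g ξ * ((((S k₀) *ᵥ (ξ - μ k₀)) ⬝ᵥ v) * fq ξ)) := by
    funext ξ
    rw [hgderiv ξ]
    ring
  have I4 : Integrable (fun ξ => fderiv ℝ g ξ v * fq ξ) := by
    rw [hI4eq]
    exact I1.neg
  -- the full vector-valued integrand
  set F : (Fin d → ℝ) → ((Fin d → ℝ) →L[ℝ] ℝ) := fun ξ =>
    ((fq ξ + ω) * (π' k₀ * g ξ)) • dotCLM ((S k₀) *ᵥ (ξ - μ k₀)) with hF_def
  have hFcont : Continuous F :=
    ((hfqcont.add continuous_const).mul (continuous_const.mul hgcont)).smul hdotwcont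
  have IF : Integrable F := by
    apply integrable_of_gauss_bound hA (μ k₀) hFcont.aestronglyMeasurable
      (((C + ω * Cq) + ω) * (π' k₀ * c₀) * (CA * (1 + ‖μ k₀‖))) (a + 3)
    intro ξ
    simp only [hF_def]
    have hns : ‖((fq ξ + ω) * (π' k₀ * g ξ)) • dotCLM ((S k₀) *ᵥ (ξ - μ k₀))‖
        ≤ |fq ξ + ω| * (π' k₀ * g ξ) * ‖dotCLM ((S k₀) *ᵥ (ξ - μ k₀))‖ := by
      have h := ContinuousLinearMap.opNorm_smul_le (𝕜 := ℝ) (𝕜₂ := ℝ)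
        ((fq ξ + ω) * (π' k₀ * g ξ)) (dotCLM ((S k₀) *ᵥ (ξ - μ k₀)))
      rw [Real.norm_eq_abs, abs_mul, abs_of_pos (mul_pos (hπ k₀) (hgpos ξ))] at h
      exact h.trans_eq (by ring)
    refine hns.trans ?_
    have b1 : |fq ξ + ω| ≤ ((C + ω * Cq) + ω) * Real.exp ((a + 2) * ‖ξ‖) := by
      have e1 : (1:ℝ) ≤ Real.exp ((a + 2) * ‖ξ‖) := hone_exp _ ξ (by linarith)
      have := hfqb ξ
      calc |fq ξ + ω| ≤ |fq ξ| + ω := by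
            calc |fq ξ + ω| ≤ |fq ξ| + |ω| := abs_add_le _ _
              _ = |fq ξ| + ω := by rw [abs_of_pos hω]
        _ ≤ (C + ω * Cq) * Real.exp ((a + 2) * ‖ξ‖) + ω * Real.exp ((a + 2) * ‖ξ‖) := by
            have := le_mul_of_one_le_right hω.le e1
            linarith
        _ = ((C + ω * Cq) + ω) * Real.exp ((a + 2) * ‖ξ‖) := by ring
    have b2 := hwnorm ξ
    calc |fq ξ + ω| * (π' k₀ * g ξ) * ‖dotCLM ((S k₀) *ᵥ (ξ - μ k₀))‖
        ≤ (((C + ω * Cq) + ω) * Real.exp ((a + 2) * ‖ξ‖)) * (π' k₀ * g ξ)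
          * ((CA * (1 + ‖μ k₀‖)) * Real.exp ‖ξ‖) := by
          apply mul_le_mul _ b2 (norm_nonneg _) _
          · exact mul_le_mul_of_nonneg_right b1 (mul_pos (hπ k₀) (hgpos ξ)).le
          · exact mul_nonneg (mul_nonneg (by linarith) (Real.exp_pos _).le)
              (mul_pos (hπ k₀) (hgpos ξ)).le
      _ = (((C + ω * Cq) + ω) * (π' k₀ * (c₀ * Real.exp (-(1/2) *
            ((ξ - μ k₀) ⬝ᵥ ((S k₀) *ᵥ (ξ - μ k₀)))))) * (CA * (1 + ‖μ k₀‖)))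
          * (Real.exp ((a + 2) * ‖ξ‖) * Real.exp ‖ξ‖) := by
          rw [← hgexp ξ]
          ring
      _ = (((C + ω * Cq) + ω) * (π' k₀ * c₀) * (CA * (1 + ‖μ k₀‖)))
          * Real.exp ((a + 3) * ‖ξ‖)
          * Real.exp (-(1/2) * ((ξ - μ k₀) ⬝ᵥ ((S k₀) *ᵥ (ξ - μ k₀)))) := by
          rw [← Real.exp_add]
          have : (a + 2) * ‖ξ‖ + ‖ξ‖ = (a + 3) * ‖ξ‖ := by ring
          rw [this]
          ring
  -- rewrite the integral of the derivative
  have hint_eq : (∫ ξ, fderiv ℝ (fun m => mix m ξ * (ℓ ξ + ω * Real.log (mix m ξ))) (μ k₀))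
      = ∫ ξ, F ξ := by
    congr 1
    funext ξ
    rw [hfd ξ, hF_def]
  have happly : (∫ ξ, F ξ) v = ∫ ξ, F ξ v := ContinuousLinearMap.integral_apply IF v
  have hFv : ∀ ξ, F ξ v = π' k₀ * (g ξ * ((((S k₀) *ᵥ (ξ - μ k₀)) ⬝ᵥ v) * fq ξ))
      + (ω * π' k₀) * (g ξ * (((S k₀) *ᵥ (ξ - μ k₀)) ⬝ᵥ v)) := by
    intro ξ
    simp only [hF_def, ContinuousLinearMap.smul_apply, dotCLM_apply', smul_eq_mul]
    ring
  have hsplit : ∫ ξ, F ξ v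
      = π' k₀ * (∫ ξ, g ξ * ((((S k₀) *ᵥ (ξ - μ k₀)) ⬝ᵥ v) * fq ξ))
      + (ω * π' k₀) * (∫ ξ, g ξ * (((S k₀) *ᵥ (ξ - μ k₀)) ⬝ᵥ v)) := by
    rw [funext hFv]
    rw [integral_add (I1.const_mul _) (I0.const_mul _), integral_const_mul,
      integral_const_mul]
  have hzero : ∫ ξ, g ξ * (((S k₀) *ᵥ (ξ - μ k₀)) ⬝ᵥ v) = 0 :=
    gauss_mean_zero hA (μ k₀) v
  have hmain : (∫ ξ, fderiv ℝ (fun m => mix m ξ * (ℓ ξ + ω * Real.log (mix m ξ))) (μ k₀)) v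
      = π' k₀ * (∫ ξ, g ξ * ((((S k₀) *ᵥ (ξ - μ k₀)) ⬝ᵥ v) * fq ξ)) := by
    rw [hint_eq, happly, hsplit, hzero]
    ring
  constructor
  · exact hmain
  · rw [hmain]
    have hgdiff : Differentiable ℝ g :=
      fun ξ => (gauss_hasFDerivAt hA (μ k₀) ξ).differentiableAt
    have hfqdiff : Differentiable ℝ fq := fun ξ => (hfq_fd ξ).differentiableAt
    have hibp := integral_mul_fderiv_eq_neg_fderiv_mul_of_integrable I4 I3 I2 (fun x _ => hgdiff x) (fun x _ => hfqdiff x)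
    rw [hibp, hI4eq, integral_neg]
    ring
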